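/- Let λ_0, …, λ_4 be quaternions with ⟨λ_k, λ_l⟩ = 1 if k = l and −1/4 if k ≠ l. Let Y ⊆ ℂ^5 × ℍ × ℍ be the set of (Z, V, W) with 2 ∑_{k=0}^{4} |Z_k|² λ_k + V W = 0 and ∑_{k=0}^{4} |Z_k|² + |V|² + |W|² = 1, and let X ⊆ ℂ^5 × ℍ^5 be the set of (z, u) such that |z_k|² + |u_k|² = 1 for each 0 ≤ k ≤ 4 and there exist V', W' ∈ ℍ with u_k = V' λ_k + W' for all k. Then the map (Z, V, W) ↦ (√5 · Z, ((conj V) λ_0 + W, …, (conj V) λ_4 + W)) is a bijection from Y onto X. -/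

import Mathlib

open Quaternion
open scoped RealInnerProductSpace

private lemma re_star_mul (a b : ℍ) : (star a * b).re = ⟪a, b⟫ := by
  simp only [Quaternion.inner_def, Quaternion.re_mul, Quaternion.re_star, Quaternion.imI_star,
    Quaternion.imJ_star, Quaternion.imK_star]
  ring

private lemma re_triple (a b c : ℍ) : ((star a * b) * star c).re = (star b * (a * c)).re := by
  simp only [Quaternion.re_mul, Quaternion.imI_mul, Quaternion.imJ_mul, Quaternion.imK_mul,
    Quaternion.re_star, Quaternion.imI_star, Quaternion.imJ_star, Quaternion.imK_star]
  ring

private lemma sum_re {ι : Type*} (s : Finset ι) (f : ι → ℍ) :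
    (∑ i ∈ s, f i).re = ∑ i ∈ s, (f i).re := by
  induction s using Finset.cons_induction with
  | empty => simp
  | cons a s ha ih => simp [Finset.sum_cons, ih]

section
variable (lam : Fin 5 → Quaternion ℝ)
  (hlam : ∀ k l : Fin 5, (star (lam k) * lam l).re = if k = l then 1 else -1 / 4)
include hlam

private lemma inner_lam : ∀ k l, ⟪lam k, lam l⟫ = if k = l then 1 else -1 / 4 := by
  intro k l; rw [← re_star_mul, hlam k l]

private lemma sum_lam_eq_zero : ∑ k, lam k = 0 := by
  have h : ⟪∑ k, lam k, ∑ l, lam l⟫ = 0 := by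
    rw [sum_inner]
    simp_rw [inner_sum, inner_lam lam hlam]
    have e : ∀ k : Fin 5, ∑ l, (if k = l then (1:ℝ) else -1 / 4) = 0 := by
      intro k
      have : ∀ l : Fin 5, (if k = l then (1:ℝ) else -1 / 4)
          = -1/4 + (if k = l then (5/4 : ℝ) else 0) := by
        intro l; split <;> norm_num
      rw [Finset.sum_congr rfl fun l _ => this l, Finset.sum_add_distrib,
        Finset.sum_ite_eq Finset.univ k (fun _ => (5/4 : ℝ)), Finset.sum_const]
      simp; norm_num
    rw [Finset.sum_congr rfl fun k _ => e k, Finset.sum_const, smul_zero]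
  exact inner_self_eq_zero.mp h

private lemma lam_span : Submodule.span ℝ (Set.range lam) = ⊤ := by
  set v : Fin 4 → ℍ := fun i => lam i.succ - lam 0 with hv
  have hvv : ∀ i j : Fin 4, ⟪v i, v j⟫ = if i = j then 5/2 else 5/4 := by
    intro i j
    simp only [hv, inner_sub_left, inner_sub_right, inner_lam lam hlam]
    rcases eq_or_ne i j with h | h
    · subst h
      simp [Fin.succ_ne_zero, (Fin.succ_ne_zero i).symm]
      norm_num
    · have hne : (i.succ : Fin 5) ≠ j.succ := fun hc => h (Fin.succ_inj.mp hc)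
      simp [h, hne, Fin.succ_ne_zero, (Fin.succ_ne_zero j).symm]
      norm_num
  have hli : LinearIndependent ℝ v := by
    rw [Fintype.linearIndependent_iff]
    intro g hg
    have h0 : ⟪∑ i, g i • v i, ∑ j, g j • v j⟫ = 0 := by rw [hg]; simp
    rw [sum_inner] at h0
    simp_rw [inner_sum, real_inner_smul_left, real_inner_smul_right, hvv] at h0
    have e : ∀ i : Fin 4, ∑ j, g i * (g j * (if i = j then (5/2:ℝ) else 5/4))
        = (5/4) * (g i * ∑ j, g j) + (5/4) * (g i * g i) := by
      intro i
      have step : ∀ j : Fin 4, g i * (g j * (if i = j then (5/2:ℝ) else 5/4))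
          = (5/4) * (g i * g j) + (if i = j then (5/4) * (g i * g i) else 0) := by
        intro j
        rcases eq_or_ne i j with h | h
        · subst h; simp; ring
        · simp [h]; ring
      rw [Finset.sum_congr rfl fun j _ => step j, Finset.sum_add_distrib,
        Finset.sum_ite_eq Finset.univ i (fun _ => (5/4) * (g i * g i)), ← Finset.mul_sum,
        Finset.mul_sum]
      simp [Finset.mul_sum, mul_assoc]
    rw [Finset.sum_congr rfl fun i _ => e i, Finset.sum_add_distrib, ← Finset.mul_sum,
      ← Finset.mul_sum, ← Finset.sum_mul] at h0
    have hT := mul_self_nonneg (∑ i, g i)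
    have hsnn : ∀ i ∈ Finset.univ, 0 ≤ g i * g i := fun i _ => mul_self_nonneg (g i)
    have hs : ∑ i, g i * g i = 0 := by
      have := Finset.sum_nonneg hsnn
      nlinarith
    intro i
    have := (Finset.sum_eq_zero_iff_of_nonneg hsnn).mp hs i (Finset.mem_univ i)
    exact mul_self_eq_zero.mp this
  have hcard : Fintype.card (Fin 4) = Module.finrank ℝ ℍ := by
    simp [Quaternion.finrank_eq_four]
  have htop := hli.span_eq_top_of_card_eq_finrank hcard
  rw [← top_le_iff, ← htop]
  apply Submodule.span_le.mpr
  rintro x ⟨i, rfl⟩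
  exact sub_mem (Submodule.subset_span ⟨i.succ, rfl⟩) (Submodule.subset_span ⟨0, rfl⟩)

private lemma T_eq (q : ℍ) : ∑ k, ⟪lam k, q⟫ • lam k = (5/4 : ℝ) • q := by
  have hq : q ∈ Submodule.span ℝ (Set.range lam) := by rw [lam_span lam hlam]; trivial
  induction hq using Submodule.span_induction with
  | mem x hx =>
      obtain ⟨l, rfl⟩ := hx
      have step : ∀ k : Fin 5, ⟪lam k, lam l⟫ • lam k
          = (-1/4 : ℝ) • lam k + (if k = l then (5/4 : ℝ) • lam k else 0) := by
        intro k
        rw [inner_lam lam hlam]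
        rcases eq_or_ne k l with h | h
        · subst h; simp; try module
        · simp [h]; try module
      rw [Finset.sum_congr rfl fun k _ => step k, Finset.sum_add_distrib,
        ← Finset.smul_sum, sum_lam_eq_zero lam hlam, smul_zero, zero_add,
        Finset.sum_ite_eq' Finset.univ l (fun k => (5/4 : ℝ) • lam k)]
      simp
  | zero => simp
  | add x y hx hy ihx ihy =>
      simp only [inner_add_right, add_smul, Finset.sum_add_distrib, ihx, ihy, smul_add]
  | smul a x hx ih =>
      simp only [real_inner_smul_right, mul_smul, ← Finset.smul_sum, ih]
      rw [smul_comm]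

private lemma norm_lam (k : Fin 5) : ‖lam k‖ = 1 := by
  have h := inner_lam lam hlam k k
  rw [if_pos rfl, real_inner_self_eq_norm_sq] at h
  nlinarith [norm_nonneg (lam k)]

private lemma norm_sq_aux (a b : ℍ) (k : Fin 5) :
    ‖star a * lam k + b‖ ^ 2 = ‖a‖ ^ 2 + ‖b‖ ^ 2 + 2 * (star (lam k) * (a * b)).re := by
  rw [norm_add_sq_real, Quaternion.inner_def, re_triple, norm_mul, norm_star,
    norm_lam lam hlam, mul_one]
  ring

private lemma re_mul_sumsmul (k : Fin 5) (s : Fin 5 → ℝ) :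
    (star (lam k) * ∑ j, s j • lam j).re = (5/4) * s k - (1/4) * ∑ j, s j := by
  rw [Finset.mul_sum, sum_re]
  simp_rw [mul_smul_comm, Quaternion.re_smul, hlam, smul_eq_mul]
  have step : ∀ j : Fin 5, s j * (if k = j then (1:ℝ) else -1 / 4)
      = (-1/4) * s j + (if k = j then (5/4) * s j else 0) := by
    intro j; split <;> ring
  rw [Finset.sum_congr rfl fun j _ => step j, Finset.sum_add_distrib,
    Finset.sum_ite_eq Finset.univ k (fun j => (5/4) * s j), ← Finset.mul_sum]
  simp; ring

end

/-- For symmetric unit quaternions `λ_0, …, λ_4`, the map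
`(Z, V, W) ↦ (√5 Z, ((conj V) λ_0 + W, …, (conj V) λ_4 + W))` is a bijection from the
intersection of quadrics `Y` onto the generalized polygon space `X`. -/
theorem bijOn_Y_X (lam : Fin 5 → Quaternion ℝ)
    (hlam : ∀ k l : Fin 5,
      (star (lam k) * lam l).re = if k = l then 1 else -1 / 4)
    (Y : Set ((Fin 5 → ℂ) × Quaternion ℝ × Quaternion ℝ))
    (hY : Y = {p | (2 : ℝ) • (∑ k, (‖p.1 k‖ ^ 2) • lam k)
        + p.2.1 * p.2.2 = 0 ∧
      (∑ k, ‖p.1 k‖ ^ 2) + ‖p.2.1‖ ^ 2 + ‖p.2.2‖ ^ 2 = 1})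
    (X : Set ((Fin 5 → ℂ) × (Fin 5 → Quaternion ℝ)))
    (hX : X = {q | (∀ k : Fin 5, ‖q.1 k‖ ^ 2 + ‖q.2 k‖ ^ 2 = 1) ∧
      ∃ V' W' : Quaternion ℝ, ∀ k : Fin 5, q.2 k = V' * lam k + W'}) :
    Set.BijOn
      (fun p : (Fin 5 → ℂ) × Quaternion ℝ × Quaternion ℝ =>
        ((fun k => (Real.sqrt 5 : ℂ) * p.1 k : Fin 5 → ℂ),
         (fun k => star p.2.1 * lam k + p.2.2 : Fin 5 → Quaternion ℝ)))
      Y X := by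
  subst hY hX
  have sqrt5 : Real.sqrt 5 ^ 2 = 5 := Real.sq_sqrt (by norm_num)
  have habs : ∀ z : ℂ, ‖(Real.sqrt 5 : ℂ) * z‖ ^ 2 = 5 * ‖z‖ ^ 2 := by
    intro z
    rw [norm_mul, mul_pow, Complex.norm_real, Real.norm_of_nonneg (Real.sqrt_nonneg 5), sqrt5]
  refine ⟨?_, ?_, ?_⟩
  · -- MapsTo
    rintro ⟨Z, V, W⟩ ⟨h1, h2⟩
    simp only [Set.mem_setOf_eq] at h1 h2 ⊢
    constructor
    · intro k
      rw [habs, norm_sq_aux lam hlam]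
      have hVW : V * W = -((2 : ℝ) • ∑ j, (‖Z j‖ ^ 2) • lam j) :=
        eq_neg_of_add_eq_zero_right h1
      have hre : (star (lam k) * (V * W)).re
          = -2 * ((5/4) * ‖Z k‖ ^ 2 - (1/4) * ∑ j, ‖Z j‖ ^ 2) := by
        rw [hVW, mul_neg, Quaternion.re_neg, mul_smul_comm, Quaternion.re_smul,
          re_mul_sumsmul lam hlam, smul_eq_mul]
        ring
      rw [hre]
      linarith [h2]
    · exact ⟨star V, W, fun k => rfl⟩
  · -- InjOn
    rintro ⟨Z, V, W⟩ _ ⟨Z', V', W'⟩ _ h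
    simp only [Prod.mk.injEq] at h
    obtain ⟨hZ, hu⟩ := h
    have h5 : ((Real.sqrt 5 : ℝ) : ℂ) ≠ 0 := by
      simp only [ne_eq, Complex.ofReal_eq_zero]
      exact (Real.sqrt_pos.mpr (by norm_num)).ne'
    have hZeq : Z = Z' := funext fun k => mul_left_cancel₀ h5 (congrFun hZ k)
    have h0 := congrFun hu 0
    have h1 := congrFun hu 1
    have hlam01 : lam 0 - lam 1 ≠ 0 := by
      intro hc
      rw [sub_eq_zero] at hc
      have e := hlam 0 1
      have e' := hlam 0 0
      rw [← hc, if_neg (by decide)] at e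
      rw [if_pos rfl] at e'
      rw [e'] at e
      norm_num at e
    have hV : star V = star V' := by
      have hsub : star V * (lam 0 - lam 1) = star V' * (lam 0 - lam 1) := by
        calc star V * (lam 0 - lam 1)
            = (star V * lam 0 + W) - (star V * lam 1 + W) := by rw [mul_sub]; abel
          _ = (star V' * lam 0 + W') - (star V' * lam 1 + W') := by rw [h0, h1]
          _ = star V' * (lam 0 - lam 1) := by rw [mul_sub]; abel
      exact mul_right_cancel₀ hlam01 hsub
    have hVeq : V = V' := star_injective hV
    have hWeq : W = W' := by
      have h0' := h0
      rw [hV] at h0'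
      exact add_left_cancel h0'
    simp [hZeq, hVeq, hWeq]
  · -- SurjOn
    rintro ⟨z, u⟩ ⟨hn0, V', W', hu0⟩
    have hn : ∀ k, ‖z k‖ ^ 2 + ‖u k‖ ^ 2 = 1 := hn0
    have hu : ∀ k, u k = V' * lam k + W' := hu0
    set q : ℍ := star V' * W' with hq
    have habs' : ∀ k, ‖(Real.sqrt 5 : ℂ)⁻¹ * z k‖ ^ 2
        = ‖z k‖ ^ 2 / 5 := by
      intro k
      rw [norm_mul, norm_inv, Complex.norm_real, Real.norm_of_nonneg (Real.sqrt_nonneg 5),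
        mul_pow, inv_pow, sqrt5]
      ring
    have huk : ∀ k, ‖u k‖ ^ 2 = ‖V'‖ ^ 2 + ‖W'‖ ^ 2 + 2 * (star (lam k) * q).re := by
      intro k
      have h := norm_sq_aux lam hlam (star V') W' k
      rw [star_star, Quaternion.norm_star] at h
      rw [hu k, h]
    have hsum0 : ∑ k, (star (lam k) * q).re = 0 := by
      have h : ∑ k, (star (lam k) * q).re = ((∑ k, star (lam k)) * q).re := by
        rw [Finset.sum_mul, sum_re]
      rw [h, ← star_sum, sum_lam_eq_zero lam hlam, star_zero, zero_mul, Quaternion.re_zero]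
    have hzk : ∀ k, ‖z k‖ ^ 2
        = 1 - ‖V'‖ ^ 2 - ‖W'‖ ^ 2 - 2 * (star (lam k) * q).re := by
      intro k
      have := hn k
      have := huk k
      linarith
    refine ⟨⟨fun k => (Real.sqrt 5 : ℂ)⁻¹ * z k, star V', W'⟩, ⟨?_, ?_⟩, ?_⟩
    · -- first Y equation
      show (2 : ℝ) • (∑ k, (‖(Real.sqrt 5 : ℂ)⁻¹ * z k‖ ^ 2) • lam k)
          + star V' * W' = 0
      have key : ∑ k, (‖(Real.sqrt 5 : ℂ)⁻¹ * z k‖ ^ 2) • lam k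
          = -(1/2 : ℝ) • q := by
        have step : ∀ k : Fin 5, (‖(Real.sqrt 5 : ℂ)⁻¹ * z k‖ ^ 2) • lam k
            = ((1 - ‖V'‖ ^ 2 - ‖W'‖ ^ 2)/5 : ℝ) • lam k
              - (2/5 : ℝ) • (⟪lam k, q⟫ • lam k) := by
          intro k
          rw [habs' k, hzk k, ← re_star_mul, smul_smul, ← sub_smul]
          congr 1
          ring
        rw [Finset.sum_congr rfl fun k _ => step k, Finset.sum_sub_distrib,
          ← Finset.smul_sum, ← Finset.smul_sum, sum_lam_eq_zero lam hlam, smul_zero,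
          T_eq lam hlam, zero_sub, smul_smul]
        norm_num
      rw [key]
      have : (2 : ℝ) • (-(1/2 : ℝ) • q) = -q := by
        rw [smul_smul]; norm_num
      rw [this, neg_add_cancel]
    · -- second Y equation
      show (∑ k, ‖(Real.sqrt 5 : ℂ)⁻¹ * z k‖ ^ 2) + ‖star V'‖ ^ 2 + ‖W'‖ ^ 2 = 1
      rw [Quaternion.norm_star]
      have hS : ∑ k, ‖(Real.sqrt 5 : ℂ)⁻¹ * z k‖ ^ 2
          = 1 - ‖V'‖ ^ 2 - ‖W'‖ ^ 2 := by
        have e : ∀ k : Fin 5, ‖(Real.sqrt 5 : ℂ)⁻¹ * z k‖ ^ 2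
            = (1 - ‖V'‖ ^ 2 - ‖W'‖ ^ 2)/5 - (2/5) * (star (lam k) * q).re := by
          intro k
          rw [habs', hzk k]; ring
        rw [Finset.sum_congr rfl fun k _ => e k, Finset.sum_sub_distrib, Finset.sum_const,
          ← Finset.mul_sum, hsum0]
        simp only [Finset.card_univ, Fintype.card_fin, nsmul_eq_mul, mul_zero, sub_zero,
          Nat.cast_ofNat]
        ring
      rw [hS]; ring
    · -- maps to the given point
      have h5 : ((Real.sqrt 5 : ℝ) : ℂ) ≠ 0 := by
        simp only [ne_eq, Complex.ofReal_eq_zero]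
        exact (Real.sqrt_pos.mpr (by norm_num)).ne'
      simp only [Prod.mk.injEq]
      constructor
      · funext k
        rw [← mul_assoc, mul_inv_cancel₀ h5, one_mul]
      · funext k
        rw [star_star, ← hu k]
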